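/- Let (Ω,𝓕,P) be a probability space, ι a finite index type, (Ωᵢ,𝓕ᵢ,μᵢ) σ-finite measure spaces for i ∈ ι, and Xᵢ : Ω → Ωᵢ measurable maps. Let X : Ω → Π i, Ωᵢ be the joint map ω ↦ (i ↦ Xᵢ(ω)). Suppose f_P : (Π i, Ωᵢ) → [0,∞] is measurable and is a density of P.map X with respect to the product of the marginal laws, Measure.pi (i ↦ P.map Xᵢ), and for each i ∈ ι, fᵢ : Ωᵢ → [0,∞] is measurable and is a density of P.map Xᵢ with respect to μᵢ. Then the function ω ↦ f_P(ω) · ∏_{i∈ι} fᵢ(ω i) is a density of P.map X with respect to Measure.pi μ: for every measurable A ⊆ Π i, Ωᵢ, ∫⁻_A f_P(ω) · ∏_{i∈ι} fᵢ(ω i) d(Measure.pi μ) = P(X⁻¹(A)). (Paper's Theorem 4.7: chain rule relating the density with respect to the product of marginal laws and the density with respect to a product reference measure.) -/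

import Mathlib

open MeasureTheory Function
open scoped ENNReal

section Aux

variable {ι : Type*} [Fintype ι] {α : ι → Type*} [∀ i, MeasurableSpace (α i)]
  (μ : ∀ i, Measure (α i)) [∀ i, SigmaFinite (μ i)]

lemma lmarginal_prod_aux [DecidableEq ι] (h : ∀ i, α i → ℝ≥0∞) (hh : ∀ i, Measurable (h i))
    (s : Finset ι) (x : ∀ i, α i) :
    (∫⋯∫⁻_s, (fun x => ∏ i, h i (x i)) ∂μ) x
      = (∏ i ∈ s, ∫⁻ y, h i y ∂μ i) * ∏ i ∈ sᶜ, h i (x i) := by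
  have hmeas : Measurable (fun x : ∀ i, α i => ∏ i, h i (x i)) :=
    Finset.measurable_prod _ (fun i _ => (hh i).comp (measurable_pi_apply i))
  induction s using Finset.induction_on generalizing x with
  | empty => simp [MeasureTheory.lmarginal_empty]
  | @insert i s hi ih =>
    rw [MeasureTheory.lmarginal_insert _ hmeas hi]
    have hic : i ∈ sᶜ := Finset.mem_compl.2 hi
    have key : ∀ y : α i,
        (∫⋯∫⁻_s, (fun x => ∏ i, h i (x i)) ∂μ) (update x i y)
          = ((∏ j ∈ s, ∫⁻ z, h j z ∂μ j) * ∏ j ∈ (insert i s)ᶜ, h j (x j)) * h i y := by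
      intro y
      rw [ih]
      rw [← Finset.mul_prod_erase _ _ hic]
      have : ∀ j ∈ sᶜ.erase i, h j (update x i y j) = h j (x j) := by
        intro j hj
        rw [update_of_ne (Finset.ne_of_mem_erase hj)]
      rw [Finset.prod_congr rfl this, update_self]
      have hce : sᶜ.erase i = (insert i s)ᶜ := by
        ext j; simp [Finset.mem_erase, and_comm, or_comm, em]
      rw [hce]; ring
    simp_rw [key]
    rw [lintegral_const_mul _ (hh i), Finset.prod_insert hi]
    ring

lemma lintegral_pi_prod (h : ∀ i, α i → ℝ≥0∞) (hh : ∀ i, Measurable (h i)) :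
    ∫⁻ x, ∏ i, h i (x i) ∂Measure.pi μ = ∏ i, ∫⁻ y, h i y ∂μ i := by
  classical
  by_cases hne : Nonempty (∀ i, α i)
  · obtain ⟨x⟩ := hne
    rw [MeasureTheory.lintegral_eq_lmarginal_univ x, lmarginal_prod_aux μ h hh]
    simp
  · -- the pi type is empty, so some `α i` is empty
    have h0 : Measure.pi μ = 0 := by
      have : IsEmpty (∀ i, α i) := not_nonempty_iff.mp hne
      exact (Measure.pi μ).eq_zero_of_isEmpty
    rw [h0, lintegral_zero_measure]
    have : ¬ (∀ i, Nonempty (α i)) := by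
      intro hall
      exact hne ⟨fun i => (hall i).some⟩
    push_neg at this
    obtain ⟨i, hi⟩ := this
    have : IsEmpty (α i) := hi
    have hzi : ∫⁻ y, h i y ∂μ i = 0 := by
      rw [(μ i).eq_zero_of_isEmpty, lintegral_zero_measure]
    exact (Finset.prod_eq_zero (Finset.mem_univ i) hzi).symm

lemma pi_withDensity (f : ∀ i, α i → ℝ≥0∞) (hf : ∀ i, Measurable (f i))
    (hsf : ∀ i, SigmaFinite ((μ i).withDensity (f i))) :
    Measure.pi (fun i => (μ i).withDensity (f i))
      = (Measure.pi μ).withDensity (fun x => ∏ i, f i (x i)) := by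
  classical
  haveI := hsf
  refine Measure.pi_eq (μ := fun i => (μ i).withDensity (f i)) fun s hs => ?_
  have hprodmeas : Measurable (fun x : ∀ i, α i => ∏ i, f i (x i)) :=
    Finset.measurable_prod _ (fun i _ => (hf i).comp (measurable_pi_apply i))
  rw [withDensity_apply _ (MeasurableSet.univ_pi hs)]
  have : ∫⁻ x in Set.pi Set.univ s, ∏ i, f i (x i) ∂Measure.pi μ
      = ∫⁻ x, ∏ i, (s i).indicator (f i) (x i) ∂Measure.pi μ := by
    rw [← lintegral_indicator (MeasurableSet.univ_pi hs)]
    congr 1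
    ext x
    by_cases hx : x ∈ Set.pi Set.univ s
    · rw [Set.indicator_of_mem hx]
      exact Finset.prod_congr rfl fun i _ =>
        (Set.indicator_of_mem (hx i (Set.mem_univ i)) _).symm
    · rw [Set.indicator_of_notMem hx]
      have hex : ∃ i, x i ∉ s i := by
        by_contra hcon
        push_neg at hcon
        exact hx fun i _ => hcon i
      obtain ⟨i, hxi⟩ := hex
      exact (Finset.prod_eq_zero (Finset.mem_univ i)
        (Set.indicator_of_notMem hxi _)).symm
  rw [this, lintegral_pi_prod μ _ (fun i => (hf i).indicator (hs i))]
  exact Finset.prod_congr rfl fun i _ =>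
    by rw [lintegral_indicator (hs i), withDensity_apply _ (hs i)]

end Aux

/-- Paper's Theorem 4.7: if `f_P` is a density of the joint law of `X = (Xᵢ)ᵢ` with
respect to the product of the marginal laws, and each `fᵢ` is a density of the law of
`Xᵢ` with respect to `μᵢ`, then `ω ↦ f_P(ω) · ∏ᵢ fᵢ(ωᵢ)` is a density of the joint law
with respect to the product reference measure `Measure.pi μ`. -/
theorem joint_density_wrt_product_reference_measure
    {Ω : Type*} [MeasurableSpace Ω] (P : Measure Ω) [IsProbabilityMeasure P]
    {ι : Type*} [Fintype ι] {α : ι → Type*} [∀ i, MeasurableSpace (α i)]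
    (μ : ∀ i, Measure (α i)) [∀ i, SigmaFinite (μ i)]
    (X : ∀ i, Ω → α i) (hX : ∀ i, Measurable (X i))
    (fP : (∀ i, α i) → ℝ≥0∞) (hfP : Measurable fP)
    (hfPdens : ∀ A : Set (∀ i, α i), MeasurableSet A →
      ∫⁻ ω in A, fP ω ∂(Measure.pi (fun i => P.map (X i))) = P ((fun ω i => X i ω) ⁻¹' A))
    (fmar : ∀ i, α i → ℝ≥0∞) (hfmar : ∀ i, Measurable (fmar i))
    (hfmardens : ∀ i, ∀ A : Set (α i), MeasurableSet A →
      ∫⁻ x in A, fmar i x ∂(μ i) = P (X i ⁻¹' A)) :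
    ∀ A : Set (∀ i, α i), MeasurableSet A →
      ∫⁻ ω in A, fP ω * ∏ i, fmar i (ω i) ∂(Measure.pi μ) =
        P ((fun ω i => X i ω) ⁻¹' A) := by
  intro A hA
  have hmap : ∀ i, P.map (X i) = (μ i).withDensity (fmar i) := by
    intro i
    ext s hs
    rw [Measure.map_apply (hX i) hs, withDensity_apply _ hs, hfmardens i s hs]
  have hsf : ∀ i, SigmaFinite ((μ i).withDensity (fmar i)) := by
    intro i
    rw [← hmap i]
    infer_instance
  have hpi : Measure.pi (fun i => P.map (X i))
      = (Measure.pi μ).withDensity (fun x => ∏ i, fmar i (x i)) := by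
    have := pi_withDensity μ fmar hfmar hsf
    rw [← this]
    congr 1
    ext i : 1
    exact hmap i
  have hprodmeas : Measurable (fun x : ∀ i, α i => ∏ i, fmar i (x i)) :=
    Finset.measurable_prod _ (fun i _ => (hfmar i).comp (measurable_pi_apply i))
  calc ∫⁻ ω in A, fP ω * ∏ i, fmar i (ω i) ∂(Measure.pi μ)
      = ∫⁻ ω in A, fP ω ∂((Measure.pi μ).withDensity (fun x => ∏ i, fmar i (x i))) := by
        rw [setLIntegral_withDensity_eq_setLIntegral_mul _ hprodmeas hfP hA]
        simp_rw [Pi.mul_apply, mul_comm]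
    _ = ∫⁻ ω in A, fP ω ∂(Measure.pi (fun i => P.map (X i))) := by rw [hpi]
    _ = P ((fun ω i => X i ω) ⁻¹' A) := hfPdens A hA
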